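/- For every positive integer b, 4/(120b-47) = 1/(30b-10) + 1/(5(120b-47)(3b-1)) + 1/(2(120b-47)(3b-1)); hence the Erdős–Straus equation has a solution for all n ≡ 73 (mod 120). -/

import Mathlib

lemma key (b : ℕ) (hb : 1 ≤ b) :
    (4 : ℚ) / (120 * b - 47) =
      1 / (30 * b - 10) + 1 / (5 * (120 * b - 47) * (3 * b - 1))
        + 1 / (2 * (120 * b - 47) * (3 * b - 1)) := by
  have hb' : (1 : ℚ) ≤ b := by exact_mod_cast hb
  have h1 : (120 * (b:ℚ) - 47) ≠ 0 := by nlinarith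
  have h2 : (30 * (b:ℚ) - 10) ≠ 0 := by nlinarith
  have h3 : (3 * (b:ℚ) - 1) ≠ 0 := by nlinarith
  rw [div_add_div _ _ h2 (by positivity), div_add_div _ _ (by positivity) (by positivity), div_eq_div_iff h1 (by positivity)]
  ring

theorem stmt_15 (b : ℕ) (hb : 1 ≤ b) :
    (4 : ℚ) / (120 * b - 47) =
      1 / (30 * b - 10) + 1 / (5 * (120 * b - 47) * (3 * b - 1))
        + 1 / (2 * (120 * b - 47) * (3 * b - 1)) ∧
    ∀ n : ℕ, 0 < n → n % 120 = 73 →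
      ∃ x y z : ℕ, 0 < x ∧ 0 < y ∧ 0 < z ∧
        (4 : ℚ) / n = 1 / x + 1 / y + 1 / z := by
  refine ⟨key b hb, fun n hn hmod => ?_⟩
  set c := n / 120 + 1 with hc
  have hc1 : 1 ≤ c := Nat.le_add_left 1 _
  have hn' : n + 47 = 120 * c := by omega
  refine ⟨30 * c - 10, 5 * (120 * c - 47) * (3 * c - 1), 2 * (120 * c - 47) * (3 * c - 1),
    by omega, Nat.mul_pos (Nat.mul_pos (by omega) (by omega)) (by omega), Nat.mul_pos (Nat.mul_pos (by omega) (by omega)) (by omega), ?_⟩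
  have := key c hc1
  have e1 : ((30 * c - 10 : ℕ) : ℚ) = 30 * c - 10 := by push_cast [Nat.cast_sub (by omega : 10 ≤ 30 * c)]; ring
  have e2 : ((120 * c - 47 : ℕ) : ℚ) = 120 * c - 47 := by push_cast [Nat.cast_sub (by omega : 47 ≤ 120 * c)]; ring
  have e3 : ((3 * c - 1 : ℕ) : ℚ) = 3 * c - 1 := by push_cast [Nat.cast_sub (by omega : 1 ≤ 3 * c)]; ring
  have en : (n : ℚ) = 120 * c - 47 := by
    have : (n : ℚ) + 47 = 120 * c := by exact_mod_cast congrArg (Nat.cast : ℕ → ℚ) hn'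
    linarith
  rw [en]
  rw [e1]; simp only [Nat.cast_mul, e2, e3, Nat.cast_ofNat]
  exact this
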